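/- Suppose α_NBS maximizes the total utility U(α) = Q − J_o(1 − Σ_m α_m) − Σ_m J_{p_m}(α_m) over all feasible α, U(α_NBS) ≥ 0, and θ_NBS = θ*(α_NBS) is the equal-utility incentive. Then (α_NBS, θ_NBS) maximizes the Nash product Π_{z∈Z} u_z(α,θ) over the feasible region Ω. -/

import Mathlib

open Finset

/-- AM-GM for natural powers. -/
lemma amgm_pow {ι : Type*} [Fintype ι] [Nonempty ι] (f : ι → ℝ)
    (hf : ∀ i, 0 ≤ f i) :
    ∏ i, f i ≤ ((∑ i, f i) / Fintype.card ι) ^ (Fintype.card ι) := by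
  set n := Fintype.card ι with hn
  have hn0 : 0 < n := Fintype.card_pos
  have hnR : (0:ℝ) < (n : ℝ) := by exact_mod_cast hn0
  have h := Real.geom_mean_le_arith_mean_weighted (Finset.univ)
      (fun _ : ι => (n : ℝ)⁻¹) f (fun i _ => by positivity)
      (by simp [Finset.card_univ, ← hn, mul_inv_cancel₀ hnR.ne']) (fun i _ => hf i)
  have hprod : (∏ i, f i ^ ((n:ℝ)⁻¹)) = (∏ i, f i) ^ ((n:ℝ)⁻¹) :=
    Real.finset_prod_rpow Finset.univ f (fun i _ => hf i) _
  have hsum : (∑ i : ι, (n:ℝ)⁻¹ * f i) = (∑ i, f i) / n := by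
    rw [← Finset.mul_sum]; ring
  rw [hprod, hsum] at h
  have hP : 0 ≤ ∏ i, f i := Finset.prod_nonneg (fun i _ => hf i)
  have h2 : ((∏ i, f i) ^ ((n:ℝ)⁻¹)) ^ (n:ℕ) ≤ ((∑ i, f i) / n) ^ (n:ℕ) :=
    pow_le_pow_left₀ (Real.rpow_nonneg hP _) h n
  calc ∏ i, f i = ((∏ i, f i) ^ ((n:ℝ)⁻¹)) ^ (n:ℕ) := by
        rw [← Real.rpow_natCast ((∏ i, f i) ^ ((n:ℝ)⁻¹)) n, ← Real.rpow_mul hP,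
          inv_mul_cancel₀ hnR.ne', Real.rpow_one]
    _ ≤ _ := h2

/-- converse / analytical approach: if α_NBS maximizes the total utility over
the feasible α's and θ_NBS is the equal-utility incentive, then (α_NBS, θ_NBS) maximizes the
Nash product over Ω. -/
theorem welfare_maximizer_with_equal_incentive_maximizes_nash_product
    {K : Type*} [Fintype K] [Nonempty K] (Q : ℝ) (hQ : 0 < Q)
    (Jo : ℝ → ℝ) (Jp : K → ℝ → ℝ)
    (N : ℝ) (hN : N = Fintype.card K + 1)
    (u : Option K → (K → ℝ) → (K → ℝ) → ℝ)
    (hu0 : ∀ α θ, u none α θ = Q - Jo (1 - ∑ k, α k) - ∑ k, α k * θ k * Q)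
    (huk : ∀ k α θ, u (some k) α θ = α k * θ k * Q - Jp k (α k))
    (Ω : Set ((K → ℝ) × (K → ℝ)))
    (hΩ : ∀ p, p ∈ Ω ↔ (∀ k, 0 < p.1 k) ∧ ∀ z, 0 ≤ u z p.1 p.2)
    (U : (K → ℝ) → ℝ)
    (hU : ∀ α, U α = Q - Jo (1 - ∑ m, α m) - ∑ m, Jp m (α m))
    (αN : K → ℝ) (hαN : ∀ k, 0 < αN k)
    (hUpos : 0 ≤ U αN)
    (hmaxU : ∀ α θ, (α, θ) ∈ Ω → U α ≤ U αN)
    (θN : K → ℝ)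
    (hθN : ∀ k, θN k =
      (Q - Jo (1 - ∑ m, αN m) + N * Jp k (αN k) - ∑ m, Jp m (αN m)) / (N * αN k * Q)) :
    ∀ α' θ', (α', θ') ∈ Ω → ∏ z, u z α' θ' ≤ ∏ z, u z αN θN := by
  intro α' θ' hmem
  have hNpos : (0:ℝ) < N := by
    rw [hN]; positivity
  have hcard : Fintype.card (Option K) = Fintype.card K + 1 := by
    simp [Fintype.card_option]
  have hNcard : N = (Fintype.card (Option K) : ℝ) := by
    rw [hcard, hN]; push_cast; ring
  -- value of αNθN Q terms
  have hterm : ∀ k, αN k * θN k * Q = (U αN + N * Jp k (αN k)) / N := by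
    intro k
    have hk := hαN k
    rw [hθN k, hU]
    field_simp
    ring
  -- each player's utility at (αN, θN) is U αN / N
  have hsomeN : ∀ k, u (some k) αN θN = U αN / N := by
    intro k
    rw [huk, hterm k]
    field_simp
    ring
  have hnoneN : u none αN θN = U αN / N := by
    rw [hu0]
    have : (∑ k, αN k * θN k * Q) = ∑ k, (U αN + N * Jp k (αN k)) / N := by
      exact Finset.sum_congr rfl (fun k _ => hterm k)
    rw [this]
    have hsum : (∑ k, (U αN + N * Jp k (αN k)) / N)
        = (Fintype.card K) * (U αN / N) + ∑ k, Jp k (αN k) := by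
      rw [Finset.sum_congr rfl (fun k _ => by field_simp :
        ∀ k ∈ Finset.univ, (U αN + N * Jp k (αN k)) / N = U αN / N + Jp k (αN k))]
      rw [Finset.sum_add_distrib, Finset.sum_const, Finset.card_univ, nsmul_eq_mul]
    rw [hsum]
    have hUe := hU αN
    have hNe : N = (Fintype.card K : ℝ) + 1 := by rw [hN]
    field_simp
    nlinarith [hUe, hNe]
  -- the Nash product at (αN, θN)
  have hprodN : ∏ z, u z αN θN = (U αN / N) ^ (Fintype.card (Option K)) := by
    rw [Finset.prod_congr rfl (fun z _ => by cases z with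
      | none => exact hnoneN
      | some k => exact hsomeN k : ∀ z ∈ Finset.univ, u z αN θN = U αN / N)]
    simp [Finset.card_univ, div_pow]
  -- feasibility facts
  obtain ⟨hpos', hnn'⟩ := (hΩ (α', θ')).1 hmem
  -- sum of utilities equals total welfare
  have hsum' : (∑ z, u z α' θ') = U α' := by
    rw [Fintype.sum_option, hu0, hU]
    have : (∑ k, u (some k) α' θ') = (∑ k, α' k * θ' k * Q) - ∑ k, Jp k (α' k) := by
      rw [← Finset.sum_sub_distrib]
      exact Finset.sum_congr rfl (fun k _ => huk k α' θ')
    rw [this]; ring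
  have hU'nn : 0 ≤ U α' := by
    rw [← hsum']; exact Finset.sum_nonneg (fun z _ => hnn' z)
  have hU'le : U α' ≤ U αN := hmaxU α' θ' hmem
  -- AM-GM
  have hamgm := amgm_pow (fun z => u z α' θ') (fun z => hnn' z)
  rw [hsum', ← hNcard] at hamgm
  refine hamgm.trans ?_
  rw [hprodN]
  exact pow_le_pow_left₀ (by positivity) (by gcongr) _
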